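/- arXiv:2107.05822 — 3 statements merged into one kernel-verified Lean document; each statement's English description precedes it below -/
import Mathlib

section
/- Let X_1, ..., X_n be random variables taking values in {0,1}, adapted to a filtration F_0 ⊆ F_1 ⊆ ... ⊆ F_n (with F_j = σ(X_1,...,X_j)). If almost surely ∑_{j=1}^n E[X_j | F_{j-1}] ≥ μ for some real μ ≥ 0, then Pr[∑_{j=1}^n X_j ≥ 1] ≥ 1 - exp(-3μ/8). -/
open MeasureTheory Finset

theorem stmt_0
    {Ω : Type*} {m0 : MeasurableSpace Ω} {P : Measure Ω} [IsProbabilityMeasure P]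
    (n : ℕ) (ℱ : Filtration ℕ m0) (X : ℕ → Ω → ℝ)
    (hadapted : Adapted ℱ X)
    (hval : ∀ j, ∀ᵐ ω ∂P, X j ω = 0 ∨ X j ω = 1)
    (μ : ℝ) (hμ : 0 ≤ μ)
    (hsum : ∀ᵐ ω ∂P, μ ≤ ∑ j ∈ Finset.Icc 1 n, (P[X j | ℱ (j-1)]) ω) :
    1 - Real.exp (-3 * μ / 8) ≤ (P {ω | 1 ≤ ∑ j ∈ Finset.Icc 1 n, X j ω}).toReal := by
  classical
  set p : ℕ → Ω → ℝ := fun j => P[X j | ℱ (j-1)] with hp_def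
  -- basic measurability / integrability
  have hXsm : ∀ j, StronglyMeasurable (X j) := fun j => ((hadapted j).mono (ℱ.le j) le_rfl).stronglyMeasurable
  have hXint : ∀ j, Integrable (X j) P := by
    intro j
    refine Integrable.mono' (integrable_const (1:ℝ)) (hXsm j).aestronglyMeasurable ?_
    filter_upwards [hval j] with ω h
    rcases h with h | h <;> simp [h]
  have hvalall : ∀ᵐ ω ∂P, ∀ j, X j ω = 0 ∨ X j ω = 1 := ae_all_iff.mpr hval
  have hp0 : ∀ j, 0 ≤ᵐ[P] p j := by
    intro j
    refine condExp_nonneg ?_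
    filter_upwards [hval j] with ω h
    rcases h with h | h <;> simp [h]
  have hp1 : ∀ j, p j ≤ᵐ[P] fun _ => (1:ℝ) := by
    intro j
    have h := condExp_mono (m := ℱ (j-1)) (hXint j) (integrable_const (1:ℝ))
      (by filter_upwards [hval j] with ω h; rcases h with h | h <;> simp [h])
    rw [condExp_const (ℱ.le (j-1))] at h
    exact h
  have hp0all : ∀ᵐ ω ∂P, ∀ j, 0 ≤ p j ω := ae_all_iff.mpr hp0
  have hp1all : ∀ᵐ ω ∂P, ∀ j, p j ω ≤ 1 := ae_all_iff.mpr hp1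
  have hpsm : ∀ j k, j - 1 ≤ k → StronglyMeasurable[ℱ k] (p j) := fun j k h =>
    stronglyMeasurable_condExp.mono (ℱ.mono h)
  -- the main supermartingale-type quantity
  set W : ℕ → Ω → ℝ := fun k ω =>
    (∏ j ∈ Icc 1 k, (1 - X j ω)) * Real.exp (3/8 * ∑ j ∈ Icc 1 k, p j ω) with hW_def
  have hWsm : ∀ k, StronglyMeasurable[ℱ k] (W k) := by
    intro k
    apply StronglyMeasurable.mul
    · exact Finset.stronglyMeasurable_fun_prod _ fun j hj =>
        stronglyMeasurable_const.sub (((hadapted j).mono (ℱ.mono (mem_Icc.mp hj).2) le_rfl).stronglyMeasurable)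
    · exact Real.continuous_exp.comp_stronglyMeasurable
        (stronglyMeasurable_const.mul (Finset.stronglyMeasurable_fun_sum _ fun j hj =>
          hpsm j k (le_trans (Nat.sub_le j 1) (mem_Icc.mp hj).2)))
  have hWbd : ∀ k, ∀ᵐ ω ∂P, 0 ≤ W k ω ∧ W k ω ≤ Real.exp (3/8 * k) := by
    intro k
    filter_upwards [hvalall, hp0all, hp1all] with ω hv h0 h1
    have hprod0 : 0 ≤ ∏ j ∈ Icc 1 k, (1 - X j ω) :=
      Finset.prod_nonneg fun j _ => by rcases hv j with h | h <;> simp [h]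
    have hprod1 : ∏ j ∈ Icc 1 k, (1 - X j ω) ≤ 1 :=
      Finset.prod_le_one (fun j _ => by rcases hv j with h | h <;> simp [h])
        (fun j _ => by rcases hv j with h | h <;> simp [h])
    have hsumle : ∑ j ∈ Icc 1 k, p j ω ≤ k := by
      calc ∑ j ∈ Icc 1 k, p j ω ≤ ∑ j ∈ Icc 1 k, (1:ℝ) :=
            Finset.sum_le_sum fun j _ => h1 j
        _ ≤ k := by simp [Nat.card_Icc]
    constructor
    · positivity
    · calc W k ω ≤ 1 * Real.exp (3/8 * ∑ j ∈ Icc 1 k, p j ω) := by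
            exact mul_le_mul_of_nonneg_right hprod1 (Real.exp_pos _).le
        _ ≤ Real.exp (3/8 * k) := by
            rw [one_mul]; exact Real.exp_le_exp.mpr (by nlinarith)
  have hWint : ∀ k, Integrable (W k) P := by
    intro k
    refine Integrable.mono' (integrable_const (Real.exp (3/8 * k)))
      ((hWsm k).mono (ℱ.le k)).aestronglyMeasurable ?_
    filter_upwards [hWbd k] with ω ⟨h0, h1⟩
    rw [Real.norm_eq_abs, abs_of_nonneg h0]; exact h1
  -- key induction
  have key : ∀ k, ∫ ω, W k ω ∂P ≤ 1 := by
    intro k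
    induction k with
    | zero => simp [hW_def]
    | succ k ih =>
      set G : Ω → ℝ := fun ω =>
        (∏ j ∈ Icc 1 k, (1 - X j ω)) *
          Real.exp (3/8 * (∑ j ∈ Icc 1 k, p j ω + p (k+1) ω)) with hG_def
      have hGsm : StronglyMeasurable[ℱ k] G := by
        apply StronglyMeasurable.mul
        · exact Finset.stronglyMeasurable_fun_prod _ fun j hj =>
            stronglyMeasurable_const.sub (((hadapted j).mono (ℱ.mono (mem_Icc.mp hj).2) le_rfl).stronglyMeasurable)
        · exact Real.continuous_exp.comp_stronglyMeasurable
            (stronglyMeasurable_const.mul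
              ((Finset.stronglyMeasurable_fun_sum _ fun j hj =>
                hpsm j k (le_trans (Nat.sub_le j 1) (mem_Icc.mp hj).2)).add
                (hpsm (k+1) k (by simp))))
      have hGbd : ∀ᵐ ω ∂P, 0 ≤ G ω ∧ G ω ≤ Real.exp (3/8 * (k+1)) := by
        filter_upwards [hvalall, hp0all, hp1all] with ω hv h0 h1
        have hprod0 : 0 ≤ ∏ j ∈ Icc 1 k, (1 - X j ω) :=
          Finset.prod_nonneg fun j _ => by rcases hv j with h | h <;> simp [h]
        have hprod1 : ∏ j ∈ Icc 1 k, (1 - X j ω) ≤ 1 :=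
          Finset.prod_le_one (fun j _ => by rcases hv j with h | h <;> simp [h])
            (fun j _ => by rcases hv j with h | h <;> simp [h])
        have hsumle : ∑ j ∈ Icc 1 k, p j ω ≤ k := by
          calc ∑ j ∈ Icc 1 k, p j ω ≤ ∑ j ∈ Icc 1 k, (1:ℝ) :=
                Finset.sum_le_sum fun j _ => h1 j
            _ ≤ k := by simp [Nat.card_Icc]
        refine ⟨by positivity, ?_⟩
        calc G ω ≤ 1 * Real.exp (3/8 * (∑ j ∈ Icc 1 k, p j ω + p (k+1) ω)) :=
              mul_le_mul_of_nonneg_right hprod1 (Real.exp_pos _).le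
          _ ≤ Real.exp (3/8 * (k+1)) := by
              rw [one_mul]
              exact Real.exp_le_exp.mpr (by nlinarith [h1 (k+1), h0 (k+1)])
      have hGint : Integrable G P := by
        refine Integrable.mono' (integrable_const (Real.exp (3/8 * (k+1))))
          ((hGsm.mono (ℱ.le k)).aestronglyMeasurable) ?_
        filter_upwards [hGbd] with ω ⟨h0, h1⟩
        rw [Real.norm_eq_abs, abs_of_nonneg h0]; exact h1
      have hWeq : W (k+1) = fun ω => G ω * (1 - X (k+1) ω) := by
        funext ω
        simp only [hW_def, hG_def]
        rw [Finset.prod_Icc_succ_top (Nat.le_add_left 1 k),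
          Finset.sum_Icc_succ_top (Nat.le_add_left 1 k)]
        ring
      have hGXint : Integrable (G * fun ω => 1 - X (k+1) ω) P := by
        have : (G * fun ω => 1 - X (k+1) ω) = W (k+1) := by
          funext ω; rw [hWeq]; rfl
        rw [this]; exact hWint (k+1)
      have hpull : P[G * fun ω => (1:ℝ) - X (k+1) ω | ℱ k]
          =ᵐ[P] G * P[fun ω => (1:ℝ) - X (k+1) ω | ℱ k] :=
        condExp_mul_of_stronglyMeasurable_left hGsm hGXint
          ((integrable_const (1:ℝ)).sub (hXint (k+1)))
      have hcX : P[fun ω => (1:ℝ) - X (k+1) ω | ℱ k] =ᵐ[P] fun ω => 1 - p (k+1) ω := by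
        have h1 := condExp_sub (m := ℱ k) (μ := P) (integrable_const (1:ℝ)) (hXint (k+1))
        have h2 : P[fun _ => (1:ℝ) | ℱ k] = fun _ => (1:ℝ) := condExp_const (ℱ.le k) 1
        have h3 : P[X (k+1) | ℱ k] = p (k+1) := rfl
        calc P[fun ω => (1:ℝ) - X (k+1) ω | ℱ k]
            =ᵐ[P] P[fun _ => (1:ℝ) | ℱ k] - P[X (k+1) | ℱ k] := h1
          _ =ᵐ[P] fun ω => 1 - p (k+1) ω := by rw [h2, h3]; rfl
      have hstep : ∫ ω, W (k+1) ω ∂P ≤ ∫ ω, W k ω ∂P := by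
        have heq1 : ∫ ω, W (k+1) ω ∂P = ∫ ω, (P[G * fun ω => (1:ℝ) - X (k+1) ω | ℱ k]) ω ∂P := by
          simp only [hWeq]
          rw [integral_condExp (ℱ.le k)]; simp only [Pi.mul_apply]
        rw [heq1]
        refine integral_mono_ae integrable_condExp (hWint k) ?_
        filter_upwards [hpull, hcX, hvalall, hp0all, hp1all] with ω h1 h2 hv hq0 hq1
        rw [h1]
        simp only [Pi.mul_apply]
        rw [h2]
        -- now: G ω * (1 - p (k+1) ω) ≤ W k ω
        have hprod0 : 0 ≤ ∏ j ∈ Icc 1 k, (1 - X j ω) :=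
          Finset.prod_nonneg fun j _ => by rcases hv j with h | h <;> simp [h]
        have hq := hq0 (k+1); have hq' := hq1 (k+1)
        set q := p (k+1) ω with hq_def
        have hexp : (1 - q) * Real.exp (3/8 * q) ≤ 1 := by
          have h5 : 1 - q ≤ Real.exp (-q) := by
            have := Real.add_one_le_exp (-q); linarith
          calc (1 - q) * Real.exp (3/8 * q) ≤ Real.exp (-q) * Real.exp (3/8 * q) :=
                mul_le_mul_of_nonneg_right h5 (Real.exp_pos _).le
            _ = Real.exp (-(5/8) * q) := by rw [← Real.exp_add]; ring_nf
            _ ≤ 1 := Real.exp_le_one_iff.mpr (by nlinarith)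
        have hGW : G ω * (1 - q) = W k ω * ((1 - q) * Real.exp (3/8 * q)) := by
          simp only [hG_def, hW_def]
          rw [mul_add, Real.exp_add]
          ring
        rw [hGW]
        calc W k ω * ((1 - q) * Real.exp (3/8 * q)) ≤ W k ω * 1 := by
              refine mul_le_mul_of_nonneg_left hexp ?_
              exact mul_nonneg hprod0 (Real.exp_pos _).le
          _ = W k ω := mul_one _
      exact le_trans hstep ih
  -- conclusion
  have hssm : Measurable fun ω => ∑ j ∈ Icc 1 n, X j ω :=
    Finset.measurable_sum _ fun j _ => (hXsm j).measurable
  set B : Set Ω := {ω | ∑ j ∈ Icc 1 n, X j ω < 1} with hB_def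
  have hBmeas : MeasurableSet B := measurableSet_lt hssm measurable_const
  have hind : ∀ᵐ ω ∂P, B.indicator (fun _ => Real.exp (3/8 * μ)) ω ≤ W n ω := by
    filter_upwards [hvalall, hp0all, hsum, hWbd n] with ω hv h0 hs ⟨hW0, _⟩
    by_cases hω : ω ∈ B
    · rw [Set.indicator_of_mem hω]
      have hX0 : ∀ j ∈ Icc 1 n, X j ω = 0 := by
        intro j hj
        rcases hv j with h | h
        · exact h
        · exfalso
          have hone : (1:ℝ) ≤ ∑ i ∈ Icc 1 n, X i ω := by
            have := Finset.single_le_sum (f := fun i => X i ω)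
              (fun i _ => by rcases hv i with h' | h' <;> simp [h']) hj
            simpa [h] using this
          exact absurd hω (by simp [hB_def, not_lt.mpr hone])
      have hprod : ∏ j ∈ Icc 1 n, (1 - X j ω) = 1 := by
        refine Finset.prod_eq_one fun j hj => by rw [hX0 j hj]; ring
      simp only [hW_def, hprod, one_mul]
      exact Real.exp_le_exp.mpr (by nlinarith)
    · rw [Set.indicator_of_notMem hω]; exact hW0
  have hintB : ∫ ω, B.indicator (fun _ => Real.exp (3/8 * μ)) ω ∂P
      = (P B).toReal * Real.exp (3/8 * μ) := by
    rw [integral_indicator_const _ hBmeas]; simp [mul_comm, Measure.real]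
  have hmain : (P B).toReal * Real.exp (3/8 * μ) ≤ 1 := by
    rw [← hintB]
    refine le_trans (integral_mono_ae ((integrable_const _).indicator hBmeas) (hWint n) hind)
      (key n)
  have hPB : (P B).toReal ≤ Real.exp (-3 * μ / 8) := by
    have hpos : 0 < Real.exp (3/8 * μ) := Real.exp_pos _
    have : (P B).toReal ≤ 1 / Real.exp (3/8 * μ) := by
      rw [le_div_iff₀ hpos]; exact hmain
    rwa [one_div, ← Real.exp_neg, show -(3/8 * μ) = -3 * μ / 8 by ring] at this
  have hcompl : {ω | 1 ≤ ∑ j ∈ Icc 1 n, X j ω} = Bᶜ := by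
    ext ω; simp [hB_def, not_lt]
  rw [hcompl, prob_compl_eq_one_sub hBmeas, ENNReal.toReal_sub_of_le prob_le_one ENNReal.one_ne_top]
  simp only [ENNReal.toReal_one]
  linarith
end

section
/- Adaptive coin tossing lower bound: Suppose coins are tossed sequentially where the probability p_j of the j-th coin coming up heads may be chosen adaptively based on the outcomes of the first j-1 coins, subject to the constraint that on every outcome path ∑_{j=1}^n p_j ≥ μ. Then the probability that no coin comes up heads is at most (1 - μ/n)^n ≤ exp(-μ); in particular, among non-adaptive strategies, choosing p_j = μ/n for every j maximizes the probability of all tails. -/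
open MeasureTheory Finset

/-- AM-GM for a product over a finset. -/
lemma my_amgm {ι : Type*} (s : Finset ι) (z : ι → ℝ) (hz : ∀ i ∈ s, 0 ≤ z i) :
    ∏ i ∈ s, z i ≤ ((∑ i ∈ s, z i) / s.card) ^ s.card := by
  rcases s.eq_empty_or_nonempty with rfl | hs
  · simp
  have hm : (0:ℝ) < s.card := by exact_mod_cast Finset.card_pos.2 hs
  have hw : ∑ _i ∈ s, (1 / (s.card:ℝ)) = 1 := by
    rw [Finset.sum_const, nsmul_eq_mul]; field_simp
  have h := Real.geom_mean_le_arith_mean_weighted s (fun _ => 1 / (s.card:ℝ)) z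
    (fun i _ => by positivity) hw hz
  have hsum : ∑ i ∈ s, (1 / (s.card:ℝ)) * z i = (∑ i ∈ s, z i) / s.card := by
    rw [Finset.sum_div, Finset.sum_congr rfl]
    intro i _; ring
  rw [hsum] at h
  have hgeq : (∏ i ∈ s, z i ^ (1 / (s.card:ℝ)))^(s.card) = ∏ i ∈ s, z i := by
    rw [← Finset.prod_pow, Finset.prod_congr rfl]
    intro i hi
    rw [← Real.rpow_natCast (z i ^ (1 / (s.card:ℝ))) s.card, ← Real.rpow_mul (hz i hi)]
    field_simp; simp
  calc ∏ i ∈ s, z i = (∏ i ∈ s, z i ^ (1 / (s.card:ℝ)))^(s.card) := hgeq.symm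
    _ ≤ ((∑ i ∈ s, z i) / s.card) ^ s.card := by
        apply pow_le_pow_left₀ _ h
        exact Finset.prod_nonneg fun i hi => Real.rpow_nonneg (hz i hi) _

/-- The pointwise recursion inequality. -/
lemma my_point (i : ℕ) (p b : ℝ) (hp0 : 0 ≤ p) (hp1 : p ≤ 1)
    (hb0 : 0 ≤ b) (hbm : b ≤ (i:ℝ)+1) (hb' : max 0 (b - p) ≤ i) :
    (1 - max 0 (b-p) / i)^i * (1 - p) ≤ (1 - b/((i:ℝ)+1))^(i+1) := by
  rcases le_or_gt b p with hbp | hbp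
  · -- max = 0
    rw [max_eq_left (by linarith)]
    simp only [zero_div, sub_zero, one_pow, one_mul]
    have hbern : 1 + ((i+1:ℕ):ℝ) * (-(b/((i:ℝ)+1))) ≤ (1 + (-(b/((i:ℝ)+1))))^(i+1) := by
      apply one_add_mul_le_pow
      have : b/((i:ℝ)+1) ≤ 1 := by
        rw [div_le_one (by positivity)]; linarith
      linarith
    have h1 : ((i+1:ℕ):ℝ) * (-(b/((i:ℝ)+1))) = -b := by push_cast; field_simp
    rw [h1] at hbern
    calc (1:ℝ) - p ≤ 1 - b := by linarith
      _ ≤ (1 + (-(b/((i:ℝ)+1))))^(i+1) := by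
          push_cast at hbern ⊢; linarith
      _ = (1 - b/((i:ℝ)+1))^(i+1) := by ring_nf
  · -- b > p : AM-GM on Fin (i+1)
    have hi : 0 < i := by
      rcases Nat.eq_zero_or_pos i with rfl | h
      · exfalso; simp at hb'; linarith
      · exact h
    have hipos : (0:ℝ) < i := by exact_mod_cast hi
    rw [max_eq_right (by linarith)] at hb' ⊢
    set c : ℝ := (b - p) / i with hc
    have hc0 : 0 ≤ c := div_nonneg (by linarith) (le_of_lt hipos)
    have hc1 : c ≤ 1 := by rw [hc, div_le_one hipos]; linarith
    set z : Fin (i+1) → ℝ := fun j => if j = 0 then 1 - p else 1 - c with hz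
    have hznn : ∀ j ∈ Finset.univ (α := Fin (i+1)), 0 ≤ z j := by
      intro j _; simp only [hz]; split <;> linarith
    have hprod : ∏ j ∈ Finset.univ, z j = (1 - c)^i * (1 - p) := by
      rw [Fin.prod_univ_succ]
      simp only [hz, if_pos rfl]
      rw [Finset.prod_congr rfl (fun j _ => if_neg (Fin.succ_ne_zero j)), Finset.prod_const]
      simp [mul_comm]
    have hsum : ∑ j ∈ Finset.univ, z j = (i:ℝ) + 1 - b := by
      rw [Fin.sum_univ_succ]
      simp only [hz, if_pos rfl]
      rw [Finset.sum_congr rfl (fun j _ => if_neg (Fin.succ_ne_zero j)), Finset.sum_const]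
      simp only [Finset.card_univ, Fintype.card_fin, nsmul_eq_mul]
      rw [hc]; field_simp; ring
    have h := my_amgm Finset.univ z hznn
    rw [hprod, hsum] at h
    simp only [Finset.card_univ, Fintype.card_fin] at h
    have : ((i:ℝ) + 1 - b) / ((i:ℕ)+1 : ℕ) = 1 - b/((i:ℝ)+1) := by
      push_cast; field_simp
    calc (1 - c)^i * (1 - p) ≤ (((i:ℝ) + 1 - b) / ((i+1 : ℕ)):ℝ)^(i+1) := by
          convert h using 3 <;> push_cast <;> ring
      _ = (1 - b/((i:ℝ)+1))^(i+1) := by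
          have heq : ((((i:ℝ)+1-b)) / (((i+1:ℕ)):ℝ)) = 1 - b/((i:ℝ)+1) := by
            push_cast; field_simp
          rw [heq]

theorem stmt_2
    {Ω : Type*} {m0 : MeasurableSpace Ω} {P : Measure Ω} [IsProbabilityMeasure P]
    (n : ℕ) (hn : 0 < n) (ℱ : Filtration ℕ m0) (X : ℕ → Ω → ℝ)
    (hadapted : StronglyAdapted ℱ X)
    (hval : ∀ j, ∀ᵐ ω ∂P, X j ω = 0 ∨ X j ω = 1)
    (μ : ℝ) (hμ0 : 0 ≤ μ) (hμn : μ ≤ n)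
    (hsum : ∀ᵐ ω ∂P, μ ≤ ∑ j ∈ Finset.Icc 1 n, (P[X j | ℱ (j-1)]) ω) :
    ((P {ω | ∑ j ∈ Finset.Icc 1 n, X j ω = 0}).toReal ≤ (1 - μ/n)^n)
    ∧ (1 - μ/n)^n ≤ Real.exp (-μ)
    ∧ (∀ q : ℕ → ℝ, (∀ j, 0 ≤ q j ∧ q j ≤ 1) → ∑ j ∈ Finset.Icc 1 n, q j = μ →
        ∏ j ∈ Finset.Icc 1 n, (1 - q j) ≤ (1 - μ/n)^n) := by
  classical
  have hnR : (0:ℝ) < n := by exact_mod_cast hn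
  refine ⟨?_, ?_, ?_⟩
  · -- main probabilistic bound
    set p : ℕ → Ω → ℝ := fun j => P[X j | ℱ (j-1)] with hpdef
    have hIcc : ∀ m : ℕ, Finset.Icc 1 m = Finset.Ioc 0 m := fun m => rfl
    -- basic facts about X
    have hXsm : ∀ j, StronglyMeasurable (X j) := fun j => (hadapted j).mono (ℱ.le j)
    have hXint : ∀ j, Integrable (X j) P := by
      intro j
      refine Integrable.mono' (integrable_const 1) (hXsm j).aestronglyMeasurable ?_
      filter_upwards [hval j] with ω h
      rcases h with h | h <;> simp [h]
    have hX0 : ∀ j, 0 ≤ᵐ[P] X j := by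
      intro j; filter_upwards [hval j] with ω h
      rcases h with h | h <;> simp [h]
    have hX1 : ∀ j, X j ≤ᵐ[P] fun _ => (1:ℝ) := by
      intro j; filter_upwards [hval j] with ω h
      rcases h with h | h <;> simp [h]
    -- facts about p
    have hp0 : ∀ j, ∀ᵐ ω ∂P, 0 ≤ p j ω := fun j => condExp_nonneg (hX0 j)
    have hp1 : ∀ j, ∀ᵐ ω ∂P, p j ω ≤ 1 := by
      intro j
      have h := condExp_mono (m := ℱ (j-1)) (μ := P) (hXint j) (integrable_const 1) (hX1 j)
      rw [condExp_const (ℱ.le (j-1))] at h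
      exact h
    have hp0' : ∀ᵐ ω ∂P, ∀ j, 0 ≤ p j ω := ae_all_iff.2 hp0
    have hp1' : ∀ᵐ ω ∂P, ∀ j, p j ω ≤ 1 := ae_all_iff.2 hp1
    have hval' : ∀ᵐ ω ∂P, ∀ j, X j ω = 0 ∨ X j ω = 1 := ae_all_iff.2 hval
    -- the products
    set D : ℕ → Ω → ℝ := fun k ω => ∏ j ∈ Finset.Ioc k n, (1 - X j ω) with hDdef
    have hDsm : ∀ k, StronglyMeasurable (D k) := by
      intro k
      exact Measurable.stronglyMeasurable <|
        Finset.measurable_prod _ (fun j _ => measurable_const.sub (hXsm j).measurable)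
    have hDbd : ∀ k, ∀ᵐ ω ∂P, 0 ≤ D k ω ∧ D k ω ≤ 1 := by
      intro k
      filter_upwards [hval'] with ω h
      constructor
      · exact Finset.prod_nonneg fun j _ => by rcases h j with hj | hj <;> simp [hj]
      · exact Finset.prod_le_one (fun j _ => by rcases h j with hj | hj <;> simp [hj])
          (fun j _ => by rcases h j with hj | hj <;> simp [hj])
    have hDint : ∀ k, Integrable (D k) P := by
      intro k
      refine Integrable.mono' (integrable_const 1) (hDsm k).aestronglyMeasurable ?_
      filter_upwards [hDbd k] with ω h
      rw [Real.norm_eq_abs, abs_le]; exact ⟨by linarith [h.1], h.2⟩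
    -- the remaining budget
    set B : ℕ → Ω → ℝ := fun k ω => max 0 (μ - ∑ j ∈ Finset.Ioc 0 k, p j ω) with hBdef
    have hB0 : ∀ k ω, 0 ≤ B k ω := fun k ω => le_max_left _ _
    have hBle : ∀ k, k ≤ n → ∀ᵐ ω ∂P, B k ω ≤ ((n - k : ℕ) : ℝ) := by
      intro k hk
      filter_upwards [hsum, hp1'] with ω hs hone
      rw [hIcc] at hs
      have hsplit : (∑ j ∈ Finset.Ioc 0 k, p j ω) + ∑ j ∈ Finset.Ioc k n, p j ω
          = ∑ j ∈ Finset.Ioc 0 n, p j ω := Finset.sum_Ioc_consecutive _ (Nat.zero_le k) hk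
      have hbound : ∑ j ∈ Finset.Ioc k n, p j ω ≤ ((n - k : ℕ) : ℝ) := by
        calc ∑ j ∈ Finset.Ioc k n, p j ω ≤ ∑ _j ∈ Finset.Ioc k n, (1:ℝ) :=
              Finset.sum_le_sum fun j _ => hone j
          _ = ((n - k : ℕ) : ℝ) := by rw [Finset.sum_const, Nat.card_Ioc]; simp
      apply max_le (by exact_mod_cast Nat.zero_le _)
      have : μ ≤ (∑ j ∈ Finset.Ioc 0 k, p j ω) + ((n - k : ℕ) : ℝ) := by
        rw [← hsplit] at hs; linarith
      linarith
    -- measurability of B at level ℱ k (uses p j for j ≤ k)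
    have hpm : ∀ j k : ℕ, j - 1 ≤ k → Measurable[ℱ k] (p j) := by
      intro j k hjk
      exact (stronglyMeasurable_condExp.mono (ℱ.mono hjk)).measurable
    -- THE KEY INDUCTION
    have key : ∀ i k, k + i = n →
        ∀ᵐ ω ∂P, (P[D k | ℱ k]) ω ≤ (1 - B k ω / i)^i := by
      intro i
      induction i with
      | zero =>
        intro k hk
        have hkn : k = n := by omega
        have hD1 : D k = fun _ => (1:ℝ) := by
          funext ω
          simp only [hDdef]
          rw [hkn, Finset.Ioc_self, Finset.prod_empty]
        rw [hD1, condExp_const (ℱ.le k)]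
        filter_upwards with ω; simp
      | succ i ih =>
        intro k hk
        have hk1 : (k+1) + i = n := by omega
        have hkn : k < n := by omega
        have ihh := ih (k+1) hk1
        -- split D k
        have hsplitD : D k = (fun ω => 1 - X (k+1) ω) * D (k+1) := by
          funext ω
          have hmem : k+1 ∈ Finset.Ioc k n := by simp; omega
          have hdiff : Finset.Ioc k n \ {k+1} = Finset.Ioc (k+1) n := by
            ext j; simp; omega
          simp only [hDdef, Pi.mul_apply]
          rw [Finset.prod_eq_mul_prod_sdiff_singleton_of_mem hmem (fun j => (1 - X j ω)), hdiff]
        -- pull out (1 - X (k+1)) at level ℱ (k+1)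
        have hfm : StronglyMeasurable[ℱ (k+1)] (fun ω => 1 - X (k+1) ω) :=
          stronglyMeasurable_const.sub (hadapted (k+1))
        have hint1 : Integrable ((fun ω => 1 - X (k+1) ω) * D (k+1)) P := by
          rw [← hsplitD]; exact hDint k
        have hpull1 : P[D k | ℱ (k+1)]
            =ᵐ[P] (fun ω => 1 - X (k+1) ω) * P[D (k+1) | ℱ (k+1)] := by
          rw [hsplitD]
          exact condExp_mul_of_stronglyMeasurable_left hfm hint1 (hDint (k+1))
        -- tower
        have htower : P[D k | ℱ k] =ᵐ[P] P[(fun ω => 1 - X (k+1) ω) * P[D (k+1) | ℱ (k+1)] | ℱ k] :=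
          (condExp_condExp_of_le (ℱ.mono (Nat.le_succ k)) (ℱ.le (k+1))).symm.trans
            (condExp_congr_ae hpull1)
        -- the dominating measurable function G'
        set G' : Ω → ℝ := fun ω => (1 - B (k+1) ω / i)^i with hG'def
        have hSm : Measurable[ℱ k] (fun ω => ∑ j ∈ Finset.Ioc 0 (k+1), p j ω) :=
          Finset.measurable_sum _ fun j hj => hpm j k (by simp at hj; omega)
        have hBm : Measurable[ℱ k] (B (k+1)) :=
          measurable_const.max (measurable_const.sub hSm)
        have hG'm : Measurable[ℱ k] G' :=
          (measurable_const.sub (hBm.div_const _)).pow_const i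
        have hG'sm : StronglyMeasurable[ℱ k] G' := hG'm.stronglyMeasurable
        have hG'bd : ∀ᵐ ω ∂P, 0 ≤ G' ω ∧ G' ω ≤ 1 := by
          filter_upwards [hBle (k+1) (by omega)] with ω hB
          rcases Nat.eq_zero_or_pos i with hi | hi
          · subst hi; simp [hG'def]
          · have hiR : (0:ℝ) < i := by exact_mod_cast hi
            have h1 : B (k+1) ω ≤ (i:ℝ) := by
              have : ((n - (k+1) : ℕ) : ℝ) = (i:ℝ) := by
                congr 1; omega
              rw [this] at hB; exact hB
            have h2 : 0 ≤ 1 - B (k+1) ω / i := by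
              rw [sub_nonneg, div_le_one hiR]; exact h1
            have h3 : 1 - B (k+1) ω / i ≤ 1 := by
              have := hB0 (k+1) ω
              have : 0 ≤ B (k+1) ω / i := by positivity
              linarith
            exact ⟨pow_nonneg h2 i, pow_le_one₀ h2 h3⟩
        -- monotonicity step
        have hintC : Integrable ((fun ω => 1 - X (k+1) ω) * P[D (k+1) | ℱ (k+1)]) P :=
          integrable_condExp.congr hpull1
        have hintG : Integrable ((fun ω => 1 - X (k+1) ω) * G') P := by
          refine Integrable.mono' (integrable_const 1)
            (((stronglyMeasurable_const.sub (hXsm (k+1))).mul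
              (hG'sm.mono (ℱ.le k))).aestronglyMeasurable) ?_
          filter_upwards [hval (k+1), hG'bd] with ω hx hg
          simp only [Pi.mul_apply, Real.norm_eq_abs, abs_mul]
          rcases hx with hx | hx
          · rw [hx]; simp [abs_of_nonneg hg.1, hg.2]
          · rw [hx]; simp
        have hmono1 : (fun ω => 1 - X (k+1) ω) * P[D (k+1) | ℱ (k+1)]
            ≤ᵐ[P] (fun ω => 1 - X (k+1) ω) * G' := by
          filter_upwards [ihh, hval (k+1)] with ω hC hx
          simp only [Pi.mul_apply]
          have hx0 : 0 ≤ 1 - X (k+1) ω := by rcases hx with h | h <;> simp [h]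
          exact mul_le_mul_of_nonneg_left hC hx0
        have hmono : P[(fun ω => 1 - X (k+1) ω) * P[D (k+1) | ℱ (k+1)] | ℱ k]
            ≤ᵐ[P] P[(fun ω => 1 - X (k+1) ω) * G' | ℱ k] :=
          condExp_mono hintC hintG hmono1
        -- pull out G' at level ℱ k
        have hcomm : (fun ω => 1 - X (k+1) ω) * G' = G' * (fun ω => 1 - X (k+1) ω) :=
          mul_comm _ _
        have hint1X : Integrable (fun ω => 1 - X (k+1) ω) P :=
          (integrable_const 1).sub (hXint (k+1))
        have hpull2 : P[(fun ω => 1 - X (k+1) ω) * G' | ℱ k]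
            =ᵐ[P] G' * P[(fun ω => 1 - X (k+1) ω) | ℱ k] := by
          rw [hcomm]
          exact condExp_mul_of_stronglyMeasurable_left hG'sm (hcomm ▸ hintG) hint1X
        -- compute P[1 - X (k+1) | ℱ k]
        have hcond1X : P[(fun ω => 1 - X (k+1) ω) | ℱ k] =ᵐ[P] fun ω => 1 - p (k+1) ω := by
          have h := condExp_sub (m := ℱ k) (μ := P) (f := fun _ => (1:ℝ)) (g := X (k+1))
            (integrable_const 1) (hXint (k+1))
          rw [condExp_const (ℱ.le k)] at h
          exact h
        -- assemble and conclude with the pointwise inequality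
        have hfinal : G' * P[(fun ω => 1 - X (k+1) ω) | ℱ k]
            ≤ᵐ[P] fun ω => (1 - B k ω / ((i+1:ℕ):ℝ))^(i+1) := by
          filter_upwards [hcond1X, hp0 (k+1), hp1 (k+1), hBle k (by omega),
            hBle (k+1) (by omega)] with ω hc hq0 hq1 hBk hBk1
          simp only [Pi.mul_apply]
          rw [hc]
          have hSsucc : ∑ j ∈ Finset.Ioc 0 (k+1), p j ω
              = (∑ j ∈ Finset.Ioc 0 k, p j ω) + p (k+1) ω :=
            Finset.sum_Ioc_succ_top (Nat.zero_le k) _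
          have hBrel : B (k+1) ω = max 0 (B k ω - p (k+1) ω) := by
            show max 0 (μ - ∑ j ∈ Finset.Ioc 0 (k+1), p j ω)
              = max 0 (max 0 (μ - ∑ j ∈ Finset.Ioc 0 k, p j ω) - p (k+1) ω)
            rw [hSsucc]
            rcases le_total (μ - ∑ j ∈ Finset.Ioc 0 k, p j ω) 0 with h | h
            · rw [max_eq_left h, max_eq_left (by linarith), max_eq_left (by linarith)]
            · rw [max_eq_right h]
              congr 1
              ring
          have hBkle : B k ω ≤ (i:ℝ) + 1 := by
            have hcast : ((n - k : ℕ) : ℝ) = (i:ℝ) + 1 := by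
              rw [show n - k = i + 1 from by omega]; push_cast; ring
            rw [hcast] at hBk; exact hBk
          have hB'le : max 0 (B k ω - p (k+1) ω) ≤ (i:ℝ) := by
            rw [← hBrel]
            have hcast : ((n - (k+1) : ℕ) : ℝ) = (i:ℝ) := by
              rw [show n - (k+1) = i from by omega]
            rw [hcast] at hBk1; exact hBk1
          have hpt := my_point i (p (k+1) ω) (B k ω) hq0 hq1 (hB0 k ω) hBkle hB'le
          have hcast2 : ((i+1:ℕ):ℝ) = (i:ℝ)+1 := by push_cast; ring
          rw [hcast2]
          show (1 - B (k+1) ω / i)^i * (1 - p (k+1) ω) ≤ _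
          rw [hBrel]
          exact hpt
        have hcast3 : ∀ ω, (1 - B k ω / ((i+1:ℕ):ℝ))^(i+1) = (1 - B k ω / ((i:ℝ)+1))^(i+1) := by
          intro ω; norm_cast
        exact htower.trans_le (hmono.trans (hpull2.trans_le hfinal))
    -- conclude from the key induction
    have hkey := key n 0 (by omega)
    have hB00 : ∀ ω, B 0 ω = μ := by
      intro ω
      show max 0 (μ - ∑ j ∈ Finset.Ioc 0 0, p j ω) = μ
      rw [Finset.Ioc_self, Finset.sum_empty, sub_zero, max_eq_right hμ0]
    have hkey' : ∀ᵐ ω ∂P, (P[D 0 | ℱ 0]) ω ≤ (1 - μ/n)^n := by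
      filter_upwards [hkey] with ω h
      rwa [hB00] at h
    have hintc : ∫ ω, (P[D 0 | ℱ 0]) ω ∂P = ∫ ω, D 0 ω ∂P := integral_condExp (ℱ.le 0)
    have hle : ∫ ω, D 0 ω ∂P ≤ (1 - μ/n)^n := by
      rw [← hintc]
      calc ∫ ω, (P[D 0|ℱ 0]) ω ∂P ≤ ∫ _ω, (1-μ/n)^n ∂P :=
            integral_mono_ae integrable_condExp (integrable_const _) hkey'
        _ = (1-μ/n)^n := by simp
    have hAmeas : MeasurableSet {ω | ∑ j ∈ Finset.Icc 1 n, X j ω = 0} :=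
      measurableSet_eq_fun (Finset.measurable_sum _ fun j _ => (hXsm j).measurable)
        measurable_const
    have hind : D 0 =ᵐ[P] ({ω | ∑ j ∈ Finset.Icc 1 n, X j ω = 0} : Set Ω).indicator
        (fun _ => (1:ℝ)) := by
      filter_upwards [hval'] with ω h
      by_cases hA : ω ∈ ({ω | ∑ j ∈ Finset.Icc 1 n, X j ω = 0} : Set Ω)
      · have hA' : ∑ j ∈ Finset.Icc 1 n, X j ω = 0 := hA
        have hnn : ∀ j ∈ Finset.Icc 1 n, 0 ≤ X j ω := fun j _ => by
          rcases h j with hj | hj <;> simp [hj]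
        have hz : ∀ j ∈ Finset.Icc 1 n, X j ω = 0 :=
          (Finset.sum_eq_zero_iff_of_nonneg hnn).1 hA'
        rw [Set.indicator_of_mem hA]
        show ∏ j ∈ Finset.Ioc 0 n, (1 - X j ω) = 1
        rw [← hIcc]
        exact Finset.prod_eq_one fun j hj => by rw [hz j hj]; ring
      · rw [Set.indicator_of_notMem hA]
        have hex : ∃ j ∈ Finset.Icc 1 n, X j ω ≠ 0 := by
          by_contra hcon
          push_neg at hcon
          exact hA (Finset.sum_eq_zero hcon)
        obtain ⟨j, hj, hjne⟩ := hex
        have hj1 : X j ω = 1 := by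
          rcases h j with hh | hh
          · exact absurd hh hjne
          · exact hh
        show ∏ j ∈ Finset.Ioc 0 n, (1 - X j ω) = 0
        rw [← hIcc]
        exact Finset.prod_eq_zero hj (by rw [hj1]; ring)
    have hDval : ∫ ω, D 0 ω ∂P = (P {ω | ∑ j ∈ Finset.Icc 1 n, X j ω = 0}).toReal := by
      rw [integral_congr_ae hind, integral_indicator_const (1:ℝ) hAmeas]
      simp; rfl
    rw [← hDval]
    exact hle
  · -- (1 - μ/n)^n ≤ exp (-μ)
    have h1 : 0 ≤ 1 - μ/n := by
      rw [sub_nonneg, div_le_one hnR]; exact hμn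
    have h2 : 1 - μ/n ≤ Real.exp (-(μ/n)) := by
      linarith [Real.add_one_le_exp (-(μ/n))]
    calc (1 - μ/n)^n ≤ (Real.exp (-(μ/n)))^n := pow_le_pow_left₀ h1 h2 n
      _ = Real.exp (-μ) := by
        rw [← Real.exp_nat_mul]
        congr 1
        field_simp
  · -- AM-GM part
    intro q hq hqsum
    have h := my_amgm (Finset.Icc 1 n) (fun j => 1 - q j) (fun j _ => by simpa using sub_nonneg.2 (hq j).2)
    have hcard : (Finset.Icc 1 n).card = n := by rw [Nat.card_Icc]; omega
    rw [hcard] at h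
    have hsum1 : ∑ j ∈ Finset.Icc 1 n, (1 - q j) = (n:ℝ) - μ := by
      rw [Finset.sum_sub_distrib, hqsum, Finset.sum_const, hcard]
      simp
    rw [hsum1] at h
    have heq : ((n:ℝ) - μ)/n = 1 - μ/n := by
      rw [sub_div, div_self (ne_of_gt hnR)]
    rw [heq] at h
    exact h
end

section
/- Doubling recursion bound: Let β > 1 and suppose (u_i)_{i≥0} is a sequence in [0,1] with u_0 = 1 and u_i ≤ u_{i-1}/β² + 1[E ≥ β^i/c₁] for all i ≥ 1, where E ≥ 1 and c₁ > 0 are constants. Then ∑_{i≥1} u_i·β^i ≤ (β/(β-1))·(1/β + (c₁β²/(β-1))·E), and consequently the total expected cost (β-1)·∑_{i≥0} u_i·β^i is at most a constant (depending only on β, c₁) times E. -/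
theorem stmt_9 (β c₁ E : ℝ) (hβ : 1 < β) (hc : 0 < c₁) (hE : 1 ≤ E)
    (u : ℕ → ℝ) (hu01 : ∀ i, u i ∈ Set.Icc (0:ℝ) 1) (hu0 : u 0 = 1)
    (hrec : ∀ i : ℕ, 1 ≤ i → u i ≤ u (i-1)/β^2 + (if β^i/c₁ ≤ E then 1 else 0)) :
    (∑' i : ℕ, u (i+1) * β^(i+1) ≤ (β/(β-1)) * (1/β + (c₁ * β^2/(β-1)) * E))
    ∧ (β-1) * ∑' i : ℕ, u i * β^i ≤ (β + c₁ * β^3/(β-1)) * E := by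
  have hβ0 : (0:ℝ) < β := lt_trans one_pos hβ
  have hβ1 : (0:ℝ) < β - 1 := by linarith
  have hD : (0:ℝ) < c₁ * E := by nlinarith
  set D : ℝ := c₁ * E with hDdef
  set a : ℕ → ℝ := fun i => u i * β ^ i with ha
  have hanon : ∀ i, 0 ≤ a i := fun i => mul_nonneg (hu01 i).1 (pow_nonneg hβ0.le i)
  set g : ℕ → ℝ := fun j => min (β ^ j) (β * D) with hg
  have hgmono : ∀ j, g j ≤ g (j + 1) := by
    intro j
    exact min_le_min (pow_le_pow_right₀ hβ.le (Nat.le_succ j)) le_rfl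
  have hgnon : ∀ j, 0 ≤ g j := fun j =>
    le_min (pow_nonneg hβ0.le j) (by positivity)
  have hgle : ∀ j, g j ≤ β * D := fun j => min_le_right _ _
  -- recursion on a with telescoping bound on indicator term
  have hrec' : ∀ i : ℕ, a (i + 1) ≤ a i / β + (g (i + 2) - g (i + 1)) / (β - 1) := by
    intro i
    have h1 := hrec (i + 1) (by omega)
    simp only [Nat.add_sub_cancel] at h1
    set t : ℝ := (if β ^ (i+1) / c₁ ≤ E then (1:ℝ) else 0) with htdef
    have hmul := mul_le_mul_of_nonneg_right h1 (pow_nonneg hβ0.le (i + 1))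
    have heq : (u i / β ^ 2 + t) * β ^ (i + 1)
        = u i * β ^ i / β + β ^ (i + 1) * t := by
      field_simp
      ring
    have hind : β ^ (i + 1) * t ≤ (g (i + 2) - g (i + 1)) / (β - 1) := by
      by_cases hcase : β ^ (i+1) / c₁ ≤ E
      · rw [htdef, if_pos hcase, mul_one]
        have hb : β ^ (i + 1) ≤ D := by
          rw [div_le_iff₀ hc] at hcase
          nlinarith
        have hg1 : g (i + 1) = β ^ (i + 1) :=
          min_eq_left (by nlinarith [pow_nonneg hβ0.le (i+1)])
        have hg2 : β * β ^ (i + 1) ≤ g (i + 2) := by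
          apply le_min
          · exact le_of_eq (by ring)
          · nlinarith
        rw [le_div_iff₀ hβ1]
        nlinarith
      · rw [htdef, if_neg hcase, mul_zero]
        exact div_nonneg (by linarith [hgmono (i + 1)]) hβ1.le
    calc a (i + 1) = u (i + 1) * β ^ (i + 1) := rfl
      _ ≤ (u i / β ^ 2 + t) * β ^ (i + 1) := hmul
      _ = u i * β ^ i / β + β ^ (i + 1) * t := heq
      _ ≤ a i / β + (g (i + 2) - g (i + 1)) / (β - 1) := add_le_add le_rfl hind
  -- partial sum bound
  have hC2 : (0:ℝ) < (β - 1) ^ 2 := by positivity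
  set C : ℝ := ((β - 1) + β ^ 2 * D) / (β - 1) ^ 2 with hCdef
  have hS : ∀ n : ℕ, ∑ i ∈ Finset.range n, a (i + 1) ≤ C := by
    intro n
    set S := ∑ i ∈ Finset.range n, a (i + 1) with hSdef
    have h1 : S ≤ ∑ i ∈ Finset.range n, (a i / β + (g (i + 2) - g (i + 1)) / (β - 1)) :=
      Finset.sum_le_sum fun i _ => hrec' i
    rw [Finset.sum_add_distrib] at h1
    have h2 : ∑ i ∈ Finset.range n, (g (i + 2) - g (i + 1)) / (β - 1)
        = (g (n + 1) - g 1) / (β - 1) := by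
      rw [← Finset.sum_div]
      congr 1
      exact Finset.sum_range_sub (fun i => g (i + 1)) n
    have h3 : (g (n + 1) - g 1) / (β - 1) ≤ β * D / (β - 1) := by
      gcongr
      linarith [hgle (n + 1), hgnon 1]
    have h4 : ∑ i ∈ Finset.range n, a i / β ≤ (1 + S) / β := by
      rw [← Finset.sum_div]
      gcongr
      have hsub : ∑ i ∈ Finset.range n, a i ≤ ∑ i ∈ Finset.range (n + 1), a i :=
        Finset.sum_le_sum_of_subset_of_nonneg
          (Finset.range_subset_range.mpr (Nat.le_succ n)) (fun i _ _ => hanon i)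
      have hsplit : ∑ i ∈ Finset.range (n + 1), a i = S + a 0 :=
        Finset.sum_range_succ' a n
      have ha0 : a 0 = 1 := by simp [ha, hu0]
      rw [hsplit, ha0] at hsub
      linarith
    have hkey : S ≤ (1 + S) / β + β * D / (β - 1) := by linarith
    have hm := mul_le_mul_of_nonneg_right hkey (le_of_lt (mul_pos hβ0 hβ1))
    have hexp : ((1 + S) / β + β * D / (β - 1)) * (β * (β - 1))
        = (1 + S) * (β - 1) + β ^ 2 * D := by
      field_simp
    rw [hexp] at hm
    rw [hCdef, le_div_iff₀ hC2]
    nlinarith [hm]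
  have hCnon : 0 ≤ C := by
    apply div_nonneg _ hC2.le
    nlinarith
  -- from finsets to ranges
  have hSfin : ∀ s : Finset ℕ, ∑ i ∈ s, a (i + 1) ≤ C := by
    intro s
    obtain ⟨n, hn⟩ := s.exists_nat_subset_range
    calc ∑ i ∈ s, a (i + 1) ≤ ∑ i ∈ Finset.range n, a (i + 1) :=
          Finset.sum_le_sum_of_subset_of_nonneg hn (fun i _ _ => hanon _)
      _ ≤ C := hS n
  have hSfin0 : ∀ s : Finset ℕ, ∑ i ∈ s, a i ≤ 1 + C := by
    intro s
    obtain ⟨n, hn⟩ := s.exists_nat_subset_range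
    have h1 : ∑ i ∈ s, a i ≤ ∑ i ∈ Finset.range (n + 1), a i :=
      Finset.sum_le_sum_of_subset_of_nonneg
        (hn.trans (Finset.range_subset_range.mpr (Nat.le_succ n))) (fun i _ _ => hanon _)
    have hsplit : ∑ i ∈ Finset.range (n + 1), a i
        = (∑ i ∈ Finset.range n, a (i + 1)) + a 0 :=
      Finset.sum_range_succ' a n
    have ha0 : a 0 = 1 := by simp [ha, hu0]
    rw [hsplit, ha0] at h1
    linarith [hS n]
  -- constant comparisons
  have hR1 : C ≤ (β / (β - 1)) * (1 / β + (c₁ * β ^ 2 / (β - 1)) * E) := by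
    rw [hCdef, div_le_iff₀ hC2]
    have hexp : (β / (β - 1)) * (1 / β + (c₁ * β ^ 2 / (β - 1)) * E) * (β - 1) ^ 2
        = (β - 1) + β ^ 3 * D := by
      rw [hDdef]
      field_simp
    rw [hexp]
    nlinarith [mul_nonneg (mul_nonneg (pow_nonneg hβ0.le 2) hD.le) hβ1.le]
  constructor
  · exact tsum_le_of_sum_le' (hCnon.trans hR1) (fun s => (hSfin s).trans hR1)
  · have ht : (∑' i : ℕ, u i * β ^ i) ≤ 1 + C :=
      tsum_le_of_sum_le' (by linarith) hSfin0
    have h1 : (β - 1) * (∑' i : ℕ, u i * β ^ i) ≤ (β - 1) * (1 + C) :=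
      mul_le_mul_of_nonneg_left ht hβ1.le
    have h2 : (β - 1) * (1 + C) ≤ (β + c₁ * β ^ 3 / (β - 1)) * E := by
      have hexp : (β - 1) * (1 + C) = (β * (β - 1) + β ^ 2 * D) / (β - 1) := by
        rw [hCdef]
        field_simp
        ring
      rw [hexp, div_le_iff₀ hβ1]
      have hexp2 : (β + c₁ * β ^ 3 / (β - 1)) * E * (β - 1)
          = β * E * (β - 1) + c₁ * β ^ 3 * E := by
        field_simp
      rw [hexp2, hDdef]
      nlinarith [mul_nonneg (mul_nonneg hβ0.le hβ1.le) (by linarith : (0:ℝ) ≤ E - 1),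
        mul_nonneg (mul_nonneg (mul_nonneg (pow_nonneg hβ0.le 2) hc.le)
          (by linarith : (0:ℝ) ≤ E)) hβ1.le]
    linarith
end
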